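/- Let $p \ge 2$ and $1 < s < \infty$. Suppose $V \ge 0$ is integrable on a bounded open set $\Omega'$, $u, h$ are measurable with $V|u|^s, V|h|^s \in L^1(\Omega')$, and $\int_{\Omega'} V(|u|^2+|h|^2)^{(s-2)/2}|u-h|^2\,dx \le c_1\int_{\Omega'}|F|^p\,dx$ for some $F \in L^p$ and $c_1 > 0$. Then for every $\epsilon \in (0,1)$ there is $c(\epsilon, s, c_1) > 0$ with $\int_{\Omega'} V|u-h|^s\,dx \le \epsilon\int_{\Omega'} V|u|^s\,dx + c(\epsilon)\int_{\Omega'}|F|^p\,dx$, provided additionally that $\int_{\Omega'} V|h|^s\,dx \le c_2(\int_{\Omega'} V|u|^s\,dx + \int_{\Omega'}|F|^p\,dx)$ for some $c_2 > 0$. -/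

import Mathlib

open MeasureTheory

private lemma sq_rpow (x : ℝ) (hx : 0 ≤ x) (r : ℝ) : (x ^ (2:ℕ)) ^ r = x ^ (2 * r) := by
  rw [← Real.rpow_natCast x 2, ← Real.rpow_mul hx]
  norm_num

private lemma max_rpow_le (s a b : ℝ) :
    max |a| |b| ^ s ≤ |a| ^ s + |b| ^ s := by
  rcases max_cases |a| |b| with ⟨hm, _⟩ | ⟨hm, _⟩ <;> rw [hm]
  · nlinarith [Real.rpow_nonneg (abs_nonneg b) s]
  · nlinarith [Real.rpow_nonneg (abs_nonneg a) s]

private lemma sq_sum_rpow_le (s : ℝ) (hs0 : 0 ≤ s) (a b : ℝ) :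
    (|a| ^ 2 + |b| ^ 2) ^ (s / 2) ≤ 2 ^ (s / 2) * (|a| ^ s + |b| ^ s) := by
  have hM0 : 0 ≤ max |a| |b| := le_trans (abs_nonneg a) (le_max_left _ _)
  have h1 : |a| ^ 2 + |b| ^ 2 ≤ 2 * max |a| |b| ^ 2 := by
    have ha : |a| ≤ max |a| |b| := le_max_left _ _
    have hb : |b| ≤ max |a| |b| := le_max_right _ _
    nlinarith [abs_nonneg a, abs_nonneg b]
  calc (|a| ^ 2 + |b| ^ 2) ^ (s / 2) ≤ (2 * max |a| |b| ^ 2) ^ (s / 2) :=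
        Real.rpow_le_rpow (by positivity) h1 (by linarith)
    _ = 2 ^ (s / 2) * (max |a| |b| ^ 2) ^ (s / 2) :=
        Real.mul_rpow (by norm_num) (by positivity)
    _ = 2 ^ (s / 2) * max |a| |b| ^ s := by
        rw [sq_rpow _ hM0, show (2:ℝ) * (s / 2) = s by ring]
    _ ≤ 2 ^ (s / 2) * (|a| ^ s + |b| ^ s) := by
        have := max_rpow_le s a b
        have h2 : (0:ℝ) ≤ 2 ^ (s / 2) := Real.rpow_nonneg (by norm_num) _
        nlinarith

private lemma quad_dom (s : ℝ) (hs : 1 < s) (a b : ℝ) :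
    (|a| ^ 2 + |b| ^ 2) ^ ((s - 2) / 2) * |a - b| ^ 2 ≤
      2 ^ (s / 2 + 1) * (|a| ^ s + |b| ^ s) := by
  have hB0 : (0:ℝ) ≤ |a| ^ 2 + |b| ^ 2 := by positivity
  rcases eq_or_lt_of_le hB0 with hB0' | hBpos
  · have ha : a = 0 := by nlinarith [sq_nonneg a, sq_nonneg b, sq_abs a, sq_abs b]
    have hb : b = 0 := by nlinarith [sq_nonneg a, sq_nonneg b, sq_abs a, sq_abs b]
    subst ha; subst hb
    simp
    positivity
  · have h1 : |a - b| ^ 2 ≤ 2 * (|a| ^ 2 + |b| ^ 2) := by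
      nlinarith [sq_abs (a - b), sq_abs a, sq_abs b, sq_nonneg (a + b)]
    have h2 : (0:ℝ) ≤ (|a| ^ 2 + |b| ^ 2) ^ ((s - 2) / 2) := Real.rpow_nonneg hB0 _
    calc (|a| ^ 2 + |b| ^ 2) ^ ((s - 2) / 2) * |a - b| ^ 2
        ≤ (|a| ^ 2 + |b| ^ 2) ^ ((s - 2) / 2) * (2 * (|a| ^ 2 + |b| ^ 2)) :=
          mul_le_mul_of_nonneg_left h1 h2
      _ = 2 * ((|a| ^ 2 + |b| ^ 2) ^ ((s - 2) / 2) * (|a| ^ 2 + |b| ^ 2) ^ (1:ℝ)) := by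
          rw [Real.rpow_one]; ring
      _ = 2 * (|a| ^ 2 + |b| ^ 2) ^ (s / 2) := by
          rw [← Real.rpow_add hBpos, show (s - 2) / 2 + 1 = s / 2 by ring]
      _ ≤ 2 * (2 ^ (s / 2) * (|a| ^ s + |b| ^ s)) := by
          have := sq_sum_rpow_le s (by linarith) a b
          linarith
      _ = 2 ^ (s / 2 + 1) * (|a| ^ s + |b| ^ s) := by
          rw [Real.rpow_add (by norm_num : (0:ℝ) < 2), Real.rpow_one]; ring

private lemma ptwise (s ε' : ℝ) (hs : 1 < s) (hε : 0 < ε') :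
    ∃ C > 0, ∀ a b : ℝ, |a - b| ^ s ≤
      ε' * (|a| ^ s + |b| ^ s) +
        C * ((|a| ^ 2 + |b| ^ 2) ^ ((s - 2) / 2) * |a - b| ^ 2) := by
  have hs0 : (0:ℝ) < s := by linarith
  rcases le_or_gt 2 s with hs2 | hs2
  · -- s ≥ 2
    refine ⟨2 ^ ((s - 2) / 2), Real.rpow_pos_of_pos (by norm_num) _, fun a b => ?_⟩
    have hd0 : (0:ℝ) ≤ |a - b| := abs_nonneg _
    rcases eq_or_lt_of_le hd0 with hd0' | hdpos
    · rw [← hd0', Real.zero_rpow (ne_of_gt hs0)]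
      positivity
    · have hB0 : (0:ℝ) ≤ |a| ^ 2 + |b| ^ 2 := by positivity
      have key : |a - b| ^ s = |a - b| ^ (s - 2) * |a - b| ^ (2:ℕ) := by
        rw [← Real.rpow_natCast (|a - b|) 2, ← Real.rpow_add hdpos]
        norm_num
      have h2 : |a - b| ^ (2:ℕ) ≤ 2 * (|a| ^ 2 + |b| ^ 2) := by
        nlinarith [sq_abs (a - b), sq_abs a, sq_abs b, sq_nonneg (a + b)]
      have h1 : |a - b| ^ (s - 2) ≤ 2 ^ ((s - 2) / 2) * (|a| ^ 2 + |b| ^ 2) ^ ((s - 2) / 2) := by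
        calc |a - b| ^ (s - 2) = (|a - b| ^ (2:ℕ)) ^ ((s - 2) / 2) := by
              rw [sq_rpow _ hd0, show (2:ℝ) * ((s - 2) / 2) = s - 2 by ring]
          _ ≤ (2 * (|a| ^ 2 + |b| ^ 2)) ^ ((s - 2) / 2) :=
              Real.rpow_le_rpow (by positivity) h2 (by linarith)
          _ = 2 ^ ((s - 2) / 2) * (|a| ^ 2 + |b| ^ 2) ^ ((s - 2) / 2) :=
              Real.mul_rpow (by norm_num) hB0
      have h3 := mul_le_mul_of_nonneg_right h1 (by positivity : (0:ℝ) ≤ |a - b| ^ (2:ℕ))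
      have hnn : (0:ℝ) ≤ ε' * (|a| ^ s + |b| ^ s) := by positivity
      have hassoc : 2 ^ ((s - 2) / 2) * (|a| ^ 2 + |b| ^ 2) ^ ((s - 2) / 2) * |a - b| ^ (2:ℕ)
          = 2 ^ ((s - 2) / 2) * ((|a| ^ 2 + |b| ^ 2) ^ ((s - 2) / 2) * |a - b| ^ (2:ℕ)) := by
        ring
      rw [key]
      linarith
  · -- 1 < s < 2
    have h2s : (0:ℝ) < 2 - s := by linarith
    set q' : ℝ := 2 / (2 - s) with hq'def
    have hq'pos : 0 < q' := by positivity
    have hpq : (2 / s).HolderConjugate q' := by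
      refine ⟨?_, by positivity, hq'pos⟩
      rw [hq'def, inv_div, inv_div, inv_one]; ring
    set T : ℝ := ε' * q' * 2 ^ (-(s / 2)) with hTdef
    have hTpos : 0 < T := by positivity
    set t : ℝ := T ^ (-q'⁻¹) with htdef
    have htpos : 0 < t := Real.rpow_pos_of_pos hTpos _
    have htq : t ^ q' = T⁻¹ := by
      rw [htdef, ← Real.rpow_mul hTpos.le, neg_mul,
        inv_mul_cancel₀ (ne_of_gt hq'pos), Real.rpow_neg_one]
    refine ⟨t ^ (2 / s) / (2 / s),
      div_pos (Real.rpow_pos_of_pos htpos _) (by positivity), fun a b => ?_⟩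
    have hB0 : (0:ℝ) ≤ |a| ^ 2 + |b| ^ 2 := by positivity
    rcases eq_or_lt_of_le hB0 with hB0' | hBpos
    · have ha : a = 0 := by nlinarith [sq_nonneg a, sq_nonneg b, sq_abs a, sq_abs b]
      have hb : b = 0 := by nlinarith [sq_nonneg a, sq_nonneg b, sq_abs a, sq_abs b]
      subst ha; subst hb
      have hz : |(0:ℝ) - 0| ^ s = 0 := by simp [Real.zero_rpow (ne_of_gt hs0)]
      rw [hz]
      positivity
    · set B : ℝ := |a| ^ 2 + |b| ^ 2 with hBdef
      set d : ℝ := |a - b| with hddef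
      have hd0 : (0:ℝ) ≤ d := abs_nonneg _
      set A : ℝ := B ^ ((s - 2) / 2) * d ^ (2:ℕ) with hAdef
      have hA0 : 0 ≤ A := by positivity
      set X : ℝ := A ^ (s / 2) with hXdef
      set Y : ℝ := B ^ (s * (2 - s) / 4) with hYdef
      have hX0 : 0 ≤ X := Real.rpow_nonneg hA0 _
      have hY0 : 0 ≤ Y := Real.rpow_nonneg hBpos.le _
      -- d ^ s = X * Y
      have hXY : d ^ s = X * Y := by
        rw [hXdef, hAdef, Real.mul_rpow (Real.rpow_nonneg hBpos.le _) (by positivity),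
          ← Real.rpow_mul hBpos.le, sq_rpow d hd0,
          show (2:ℝ) * (s / 2) = s by ring, hYdef, mul_comm (B ^ ((s - 2) / 2 * (s / 2))) (d ^ s),
          mul_assoc, ← Real.rpow_add hBpos,
          show (s - 2) / 2 * (s / 2) + s * (2 - s) / 4 = 0 by ring, Real.rpow_zero, mul_one]
      -- Young's inequality
      have hy := Real.young_inequality (X * t) (Y / t) hpq
      have he1 : (X * t) * (Y / t) = X * Y := by field_simp
      have he2 : |X * t| ^ (2 / s) = X ^ (2 / s) * t ^ (2 / s) := by
        rw [abs_of_nonneg (mul_nonneg hX0 htpos.le), Real.mul_rpow hX0 htpos.le]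
      have he3 : X ^ (2 / s) = A := by
        rw [hXdef, ← Real.rpow_mul hA0, show s / 2 * (2 / s) = 1 by
          field_simp, Real.rpow_one]
      have he4 : |Y / t| ^ q' = Y ^ q' / t ^ q' := by
        rw [abs_of_nonneg (div_nonneg hY0 htpos.le), Real.div_rpow hY0 htpos.le]
      have he5 : Y ^ q' = B ^ (s / 2) := by
        rw [hYdef, ← Real.rpow_mul hBpos.le, hq'def,
          show s * (2 - s) / 4 * (2 / (2 - s)) = s / 2 by field_simp; ring]
      have he6 : Y ^ q' / t ^ q' / q' = ε' * 2 ^ (-(s / 2)) * B ^ (s / 2) := by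
        rw [he5, htq, hTdef]
        field_simp
      have hBs : B ^ (s / 2) ≤ 2 ^ (s / 2) * (|a| ^ s + |b| ^ s) :=
        sq_sum_rpow_le s (by linarith) a b
      have h22 : (2:ℝ) ^ (-(s / 2)) * 2 ^ (s / 2) = 1 := by
        rw [← Real.rpow_add (by norm_num : (0:ℝ) < 2)]
        norm_num
      calc d ^ s = (X * t) * (Y / t) := by rw [he1, hXY]
        _ ≤ |X * t| ^ (2 / s) / (2 / s) + |Y / t| ^ q' / q' := hy
        _ = t ^ (2 / s) / (2 / s) * A + ε' * 2 ^ (-(s / 2)) * B ^ (s / 2) := by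
            rw [he2, he3, he4, he6]; ring
        _ ≤ t ^ (2 / s) / (2 / s) * A + ε' * 2 ^ (-(s / 2)) * (2 ^ (s / 2) * (|a| ^ s + |b| ^ s)) := by
            have hc : (0:ℝ) ≤ ε' * 2 ^ (-(s / 2)) := by positivity
            have hm := mul_le_mul_of_nonneg_left hBs hc
            linarith
        _ = ε' * (|a| ^ s + |b| ^ s) + t ^ (2 / s) / (2 / s) * A := by
            rw [show ε' * 2 ^ (-(s / 2)) * (2 ^ (s / 2) * (|a| ^ s + |b| ^ s))
              = ε' * (2 ^ (-(s / 2)) * 2 ^ (s / 2)) * (|a| ^ s + |b| ^ s) by ring, h22]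
            ring

/-- Absorption estimate for the lower order term (estimate (4.4)):
from the weighted quadratic control of `u - h` and the energy bound for
`V|h|^s`, deduce `∫ V|u-h|^s ≤ ε ∫ V|u|^s + c(ε) ∫ |F|^p`. -/
theorem lower_order_absorption (n : ℕ) (p s c₁ c₂ : ℝ)
    (hp : 2 ≤ p) (hs : 1 < s) (hc₁ : 0 < c₁) (hc₂ : 0 < c₂)
    (Ω' : Set (EuclideanSpace ℝ (Fin n))) (hΩ'open : IsOpen Ω')
    (hΩ'bdd : Bornology.IsBounded Ω')
    (V : EuclideanSpace ℝ (Fin n) → ℝ) (hV₀ : ∀ x, 0 ≤ V x)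
    (hVint : IntegrableOn V Ω' volume)
    (u h : EuclideanSpace ℝ (Fin n) → ℝ)
    (hum : Measurable u) (hhm : Measurable h)
    (F : EuclideanSpace ℝ (Fin n) → EuclideanSpace ℝ (Fin n))
    (hFint : IntegrableOn (fun x => ‖F x‖ ^ p) Ω' volume)
    (hVu : IntegrableOn (fun x => V x * |u x| ^ s) Ω' volume)
    (hVh : IntegrableOn (fun x => V x * |h x| ^ s) Ω' volume)
    -- weighted quadratic control of `u - h`
    (hquad : ∫ x in Ω', V x * (|u x| ^ 2 + |h x| ^ 2) ^ ((s - 2) / 2) * |u x - h x| ^ 2 ≤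
      c₁ * ∫ x in Ω', ‖F x‖ ^ p)
    -- energy bound for `V|h|^s`
    (henergy : ∫ x in Ω', V x * |h x| ^ s ≤
      c₂ * ((∫ x in Ω', V x * |u x| ^ s) + ∫ x in Ω', ‖F x‖ ^ p)) :
    ∀ ε : ℝ, 0 < ε → ε < 1 → ∃ c > 0,
      ∫ x in Ω', V x * |u x - h x| ^ s ≤
        ε * (∫ x in Ω', V x * |u x| ^ s) + c * ∫ x in Ω', ‖F x‖ ^ p := by
  intro ε hε0 hε1
  have measΩ : MeasurableSet Ω' := hΩ'open.measurableSet
  have hIu0 : 0 ≤ ∫ x in Ω', V x * |u x| ^ s :=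
    setIntegral_nonneg measΩ fun x _ =>
      mul_nonneg (hV₀ x) (Real.rpow_nonneg (abs_nonneg _) s)
  have hIF0 : 0 ≤ ∫ x in Ω', ‖F x‖ ^ p :=
    setIntegral_nonneg measΩ fun x _ => Real.rpow_nonneg (norm_nonneg _) p
  by_cases hfi : IntegrableOn (fun x => V x * |u x - h x| ^ s) Ω' volume
  · -- the integrable case
    have h1c₂ : (0:ℝ) < 1 + c₂ := by linarith
    set ε' : ℝ := ε / (1 + c₂) with hε'def
    have hε'pos : 0 < ε' := div_pos hε0 h1c₂
    obtain ⟨C, hCpos, hC⟩ := ptwise s ε' hs hε'pos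
    set G : EuclideanSpace ℝ (Fin n) → ℝ :=
      fun x => V x * (|u x| ^ 2 + |h x| ^ 2) ^ ((s - 2) / 2) * |u x - h x| ^ 2 with hGdef
    have hG0 : ∀ x, 0 ≤ G x := fun x =>
      mul_nonneg (mul_nonneg (hV₀ x) (Real.rpow_nonneg (by positivity) _)) (by positivity)
    have hGsm : AEStronglyMeasurable G (volume.restrict Ω') := by
      refine (hVint.1.mul ?_).mul ?_
      · exact ((((hum.abs.pow_const 2).add (hhm.abs.pow_const 2)).pow_const
          ((s - 2) / 2)).aestronglyMeasurable)
      · exact ((hum.sub hhm).abs.pow_const 2).aestronglyMeasurable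
    have hGle : ∀ x, G x ≤ 2 ^ (s / 2 + 1) * (V x * |u x| ^ s + V x * |h x| ^ s) := by
      intro x
      have h1 := quad_dom s hs (u x) (h x)
      have h2 := mul_le_mul_of_nonneg_left h1 (hV₀ x)
      calc G x = V x * ((|u x| ^ 2 + |h x| ^ 2) ^ ((s - 2) / 2) * |u x - h x| ^ 2) := by
            rw [hGdef]; ring
        _ ≤ V x * (2 ^ (s / 2 + 1) * (|u x| ^ s + |h x| ^ s)) := h2
        _ = 2 ^ (s / 2 + 1) * (V x * |u x| ^ s + V x * |h x| ^ s) := by ring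
    have hGint : IntegrableOn G Ω' volume := by
      refine Integrable.mono' ((hVu.add hVh).const_mul (2 ^ (s / 2 + 1))) hGsm ?_
      refine Filter.Eventually.of_forall fun x => ?_
      rw [Real.norm_eq_abs, abs_of_nonneg (hG0 x)]
      exact hGle x
    set g : EuclideanSpace ℝ (Fin n) → ℝ :=
      fun x => ε' * (V x * |u x| ^ s + V x * |h x| ^ s) + C * G x with hgdef
    have hgint : IntegrableOn g Ω' volume :=
      ((hVu.add hVh).const_mul ε').add (hGint.const_mul C)
    have hptle : ∀ x, V x * |u x - h x| ^ s ≤ g x := by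
      intro x
      have h1 := hC (u x) (h x)
      have h2 := mul_le_mul_of_nonneg_left h1 (hV₀ x)
      calc V x * |u x - h x| ^ s
          ≤ V x * (ε' * (|u x| ^ s + |h x| ^ s) +
              C * ((|u x| ^ 2 + |h x| ^ 2) ^ ((s - 2) / 2) * |u x - h x| ^ 2)) := h2
        _ = g x := by rw [hgdef, hGdef]; ring
    have hmono : ∫ x in Ω', V x * |u x - h x| ^ s ≤ ∫ x in Ω', g x :=
      setIntegral_mono_on hfi hgint measΩ fun x _ => hptle x
    have hint1 : IntegrableOn (fun x => ε' * (V x * |u x| ^ s + V x * |h x| ^ s)) Ω' volume :=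
      (hVu.add hVh).const_mul ε'
    have hint2 : IntegrableOn (fun x => C * G x) Ω' volume := hGint.const_mul C
    have hsplit : ∫ x in Ω', g x =
        ε' * ((∫ x in Ω', V x * |u x| ^ s) + ∫ x in Ω', V x * |h x| ^ s) +
          C * ∫ x in Ω', G x := by
      simp only [hgdef]
      rw [integral_add hint1 hint2, integral_const_mul, integral_const_mul,
        integral_add hVu hVh]
    have hIG : ∫ x in Ω', G x ≤ c₁ * ∫ x in Ω', ‖F x‖ ^ p := hquad
    refine ⟨ε' * c₂ + C * c₁, add_pos (mul_pos hε'pos hc₂) (mul_pos hCpos hc₁), ?_⟩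
    have h3 := mul_le_mul_of_nonneg_left henergy hε'pos.le
    have h4 := mul_le_mul_of_nonneg_left hIG hCpos.le
    have h5 : ε' * (1 + c₂) = ε := by
      rw [hε'def]; field_simp
    calc ∫ x in Ω', V x * |u x - h x| ^ s ≤ ∫ x in Ω', g x := hmono
      _ = ε' * ((∫ x in Ω', V x * |u x| ^ s) + ∫ x in Ω', V x * |h x| ^ s) +
          C * ∫ x in Ω', G x := hsplit
      _ ≤ ε' * ((∫ x in Ω', V x * |u x| ^ s) + ∫ x in Ω', V x * |h x| ^ s) +
          C * (c₁ * ∫ x in Ω', ‖F x‖ ^ p) := by linarith [h4]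
      _ = ε' * (∫ x in Ω', V x * |u x| ^ s) + ε' * (∫ x in Ω', V x * |h x| ^ s) +
          C * c₁ * ∫ x in Ω', ‖F x‖ ^ p := by ring
      _ ≤ ε' * (∫ x in Ω', V x * |u x| ^ s) +
          ε' * (c₂ * ((∫ x in Ω', V x * |u x| ^ s) + ∫ x in Ω', ‖F x‖ ^ p)) +
          C * c₁ * ∫ x in Ω', ‖F x‖ ^ p := by linarith [h3]
      _ = ε' * (1 + c₂) * (∫ x in Ω', V x * |u x| ^ s) +
          (ε' * c₂ + C * c₁) * ∫ x in Ω', ‖F x‖ ^ p := by ring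
      _ = ε * (∫ x in Ω', V x * |u x| ^ s) +
          (ε' * c₂ + C * c₁) * ∫ x in Ω', ‖F x‖ ^ p := by rw [h5]
  · -- the non-integrable case: the integral is zero by convention
    refine ⟨1, one_pos, ?_⟩
    rw [integral_undef hfi]
    have h1 := mul_nonneg hε0.le hIu0
    linarith
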